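/- Let U: [0,T] × ℂ → ℂ be such that for each t, U(t,·) is complex differentiable (holomorphic), and suppose U satisfies the first-order PDE ∂U/∂t(t,x) = -[g̃(t,x) + α(t)U(t,x) + β(t)σ(t)U_x(t,x) + θ(t)γ(t)U_x(t,x)] with terminal condition U(T,x) = h(x), where g̃(t,·) and h are holomorphic and α, β, θ, σ, γ are continuous complex-valued functions of t. If V is another such solution, then U = V (uniqueness of classical solutions among functions holomorphic in x). -/

import Mathlib

open Set Metric intervalIntegral Filter Topology

/-- Cauchy estimate for entire functions. -/
lemma entire_deriv_bound {f : ℂ → ℂ} (hf : Differentiable ℂ f) {z : ℂ} {R C : ℝ} (hR : 0 < R)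
    (hC : ∀ w ∈ closedBall z R, ‖f w‖ ≤ C) : ‖deriv f z‖ ≤ C / R :=
  Complex.norm_deriv_le_of_forall_mem_sphere_norm_le hR hf.diffContOnCl
    (fun w hw => hC w (sphere_subset_closedBall hw))

set_option maxHeartbeats 1000000 in
theorem key_uniqueness (T : ℝ) (hT : 0 < T) (α c : ℝ → ℂ)
    (hα : Continuous α) (hc : Continuous c)
    (W : ℝ → ℂ → ℂ) (hW_hol : ∀ t, Differentiable ℂ (W t))
    (hW_pde : ∀ t ∈ Set.Icc 0 T, ∀ x : ℂ,
      HasDerivAt (fun s => W s x) (-(α t * W t x + c t * deriv (W t) x)) t)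
    (hW_term : ∀ x, W T x = 0) :
    ∀ t ∈ Set.Icc 0 T, ∀ x : ℂ, W t x = 0 := by
  -- continuity in time
  have hWtc : ∀ x : ℂ, ContinuousOn (fun s => W s x) (Icc 0 T) :=
    fun x s hs => ((hW_pde s hs x).continuousAt).continuousWithinAt
  -- Baire category: uniform bound on some ball
  obtain ⟨n, x₁, hx₁⟩ : ∃ n : ℕ, (interior {x : ℂ | ∀ s ∈ Icc (0:ℝ) T, ‖W s x‖ ≤ n}).Nonempty := by
    apply nonempty_interior_of_iUnion_of_closed
    · intro n
      have : {x : ℂ | ∀ s ∈ Icc (0:ℝ) T, ‖W s x‖ ≤ n} =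
          ⋂ s ∈ Icc (0:ℝ) T, {x | ‖W s x‖ ≤ n} := by ext; simp
      rw [this]
      exact isClosed_biInter fun s _ =>
        isClosed_le ((hW_hol s).continuous.norm) continuous_const
    · rw [eq_univ_iff_forall]
      intro x
      obtain ⟨M, hM⟩ := isCompact_Icc.exists_bound_of_continuousOn (hWtc x)
      refine mem_iUnion.2 ⟨⌈M⌉₊, fun s hs => (hM s hs).trans (Nat.le_ceil M)⟩
  obtain ⟨ρ, hρ, hρsub⟩ : ∃ ρ > 0, ball x₁ ρ ⊆ {x : ℂ | ∀ s ∈ Icc (0:ℝ) T, ‖W s x‖ ≤ n} := by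
    obtain ⟨ρ, hρ, hsub⟩ := Metric.isOpen_iff.1 isOpen_interior x₁ hx₁
    exact ⟨ρ, hρ, hsub.trans interior_subset⟩
  set r : ℝ := ρ / 4 with hr_def
  have hr : 0 < r := by positivity
  set B : ℝ := (n : ℝ) with hB_def
  have hB0 : 0 ≤ B := Nat.cast_nonneg n
  have hB : ∀ s ∈ Icc (0:ℝ) T, ∀ x ∈ closedBall x₁ (3 * r), ‖W s x‖ ≤ B := by
    intro s hs x hx
    refine hρsub ?_ s hs
    rw [mem_ball]
    rw [mem_closedBall] at hx
    nlinarith [hx]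
  -- Cauchy estimate for spatial derivative
  have hWx : ∀ s ∈ Icc (0:ℝ) T, ∀ x ∈ closedBall x₁ (2 * r), ‖deriv (W s) x‖ ≤ B / r := by
    intro s hs x hx
    refine entire_deriv_bound (hW_hol s) hr fun w hw => hB s hs w ?_
    rw [mem_closedBall] at *
    have := dist_triangle w x x₁
    linarith
  -- coefficient bounds
  obtain ⟨Ca₀, hCa₀⟩ := isCompact_Icc.exists_bound_of_continuousOn
    (hα.continuousOn : ContinuousOn α (Icc 0 T))
  obtain ⟨Cc₀, hCc₀⟩ := isCompact_Icc.exists_bound_of_continuousOn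
    (hc.continuousOn : ContinuousOn c (Icc 0 T))
  set Ca : ℝ := max Ca₀ 0 with hCa_def
  set Cc : ℝ := max Cc₀ 0 with hCc_def
  have hCa : ∀ s ∈ Icc (0:ℝ) T, ‖α s‖ ≤ Ca := fun s hs => (hCa₀ s hs).trans (le_max_left _ _)
  have hCc : ∀ s ∈ Icc (0:ℝ) T, ‖c s‖ ≤ Cc := fun s hs => (hCc₀ s hs).trans (le_max_left _ _)
  have hCa0 : 0 ≤ Ca := le_max_right _ _
  have hCc0 : 0 ≤ Cc := le_max_right _ _
  set L : ℝ := Ca * B + Cc * (B / r) with hL_def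
  have hL0 : 0 ≤ L := by positivity
  -- time-Lipschitz bound for W
  have hLip : ∀ x ∈ closedBall x₁ (2 * r), ∀ s ∈ Icc (0:ℝ) T, ∀ s' ∈ Icc (0:ℝ) T,
      ‖W s x - W s' x‖ ≤ L * |s - s'| := by
    intro x hx s hs s' hs'
    have key := Convex.norm_image_sub_le_of_norm_hasDerivWithin_le
      (f := fun s => W s x) (f' := fun u => -(α u * W u x + c u * deriv (W u) x))
      (s := Icc (0:ℝ) T) (C := L)
      (fun u hu => (hW_pde u hu x).hasDerivWithinAt)
      (fun u hu => by
        have h1 : ‖α u * W u x‖ ≤ Ca * B := by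
          rw [norm_mul]
          exact mul_le_mul (hCa u hu)
            (hB u hu x (by rw [mem_closedBall] at *; linarith)) (norm_nonneg _) hCa0
        have h2 : ‖c u * deriv (W u) x‖ ≤ Cc * (B / r) := by
          rw [norm_mul]
          exact mul_le_mul (hCc u hu) (hWx u hu x hx) (norm_nonneg _) hCc0
        calc ‖-(α u * W u x + c u * deriv (W u) x)‖ = ‖α u * W u x + c u * deriv (W u) x‖ :=
              norm_neg _
          _ ≤ ‖α u * W u x‖ + ‖c u * deriv (W u) x‖ := norm_add_le _ _
          _ ≤ L := by rw [hL_def]; linarith)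
      (convex_Icc 0 T) hs' hs
    calc ‖W s x - W s' x‖ ≤ L * ‖s - s'‖ := key
      _ = L * |s - s'| := by rw [Real.norm_eq_abs]
  -- time-Lipschitz bound for spatial derivative
  have hLipx : ∀ x ∈ closedBall x₁ r, ∀ s ∈ Icc (0:ℝ) T, ∀ s' ∈ Icc (0:ℝ) T,
      ‖deriv (W s) x - deriv (W s') x‖ ≤ L / r * |s - s'| := by
    intro x hx s hs s' hs'
    have hdiff : Differentiable ℂ (fun z => W s z - W s' z) := (hW_hol s).sub (hW_hol s')
    have h1 : deriv (W s) x - deriv (W s') x = deriv (fun z => W s z - W s' z) x := by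
      rw [deriv_fun_sub ((hW_hol s) x) ((hW_hol s') x)]
    rw [h1]
    have h2 := entire_deriv_bound hdiff (z := x) hr (C := L * |s - s'|) (fun w hw => by
      refine hLip w ?_ s hs s' hs'
      rw [mem_closedBall] at *
      have := dist_triangle w x x₁
      linarith)
    calc ‖deriv (fun z => W s z - W s' z) x‖ ≤ L * |s - s'| / r := h2
      _ = L / r * |s - s'| := by ring
  -- continuity of spatial derivative in space
  have hWxc : ∀ s : ℝ, Continuous (deriv (W s)) := fun s =>
    ((hW_hol s).contDiff (n := 1)).continuous_deriv le_rfl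
  -- joint continuity (ε-δ) of the spatial derivative
  have hGcont : ∀ u ∈ Icc (0:ℝ) T, ∀ z ∈ closedBall x₁ r, ∀ ε > 0, ∃ δ > 0,
      ∀ u' ∈ Icc (0:ℝ) T, ∀ z' ∈ closedBall x₁ r, |u' - u| < δ → ‖z' - z‖ < δ →
        ‖deriv (W u') z' - deriv (W u) z‖ < ε := by
    intro u hu z hz ε hε
    obtain ⟨δ₁, hδ₁, hδ₁p⟩ := Metric.continuous_iff.1 (hWxc u) z (ε / 2) (half_pos hε)
    refine ⟨min δ₁ (ε * r / (2 * (L + 1))), by positivity, fun u' hu' z' hz' hdu hdz => ?_⟩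
    have e1 : ‖deriv (W u') z' - deriv (W u) z'‖ < ε / 2 := by
      have := hLipx z' hz' u' hu' u hu
      have h3 : L / r * |u' - u| < ε / 2 := by
        have hlt : |u' - u| < ε * r / (2 * (L + 1)) := lt_of_lt_of_le hdu (min_le_right _ _)
        have : L / r * |u' - u| ≤ L / r * (ε * r / (2 * (L + 1))) :=
          mul_le_mul_of_nonneg_left hlt.le (by positivity)
        have heq : L / r * (ε * r / (2 * (L + 1))) = ε * (L / (L + 1)) / 2 := by
          field_simp
        nlinarith [abs_nonneg (u' - u), div_lt_one (show (0:ℝ) < L + 1 by linarith) |>.2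
          (show L < L + 1 by linarith), mul_pos (half_pos hε) (sub_pos.2 (div_lt_one
          (show (0:ℝ) < L + 1 by linarith) |>.2 (show L < L + 1 by linarith)))]
      linarith
    have e2 : ‖deriv (W u) z' - deriv (W u) z‖ < ε / 2 := by
      have := hδ₁p z' (by rw [dist_eq_norm]; exact lt_of_lt_of_le hdz (min_le_left _ _))
      rwa [dist_eq_norm] at this
    calc ‖deriv (W u') z' - deriv (W u) z‖
        ≤ ‖deriv (W u') z' - deriv (W u) z'‖ + ‖deriv (W u) z' - deriv (W u) z‖ :=
          norm_sub_le_norm_sub_add_norm_sub _ _ _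
      _ < ε / 2 + ε / 2 := add_lt_add e1 e2
      _ = ε := add_halves ε
  -- FTC helper for continuous integrands
  have hFTC : ∀ f : ℝ → ℂ, Continuous f → ∀ a u : ℝ,
      HasDerivAt (fun v => ∫ w in a..v, f w) (f u) u := fun f hf a u =>
    intervalIntegral.integral_hasDerivAt_right (hf.intervalIntegrable _ _)
      (hf.stronglyMeasurableAtFilter _ _) hf.continuousAt
  -- local backward propagation of vanishing
  have prop : ∀ τ, 0 < τ → τ ≤ T → (∀ x, W τ x = 0) →
      ∀ s₁, τ - min τ (r / (2 * (Cc + 1))) ≤ s₁ → s₁ ≤ τ → ∀ x, W s₁ x = 0 := by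
    intro τ hτ0 hτT hWτ s₁ hs₁l hs₁u
    set ε : ℝ := min τ (r / (2 * (Cc + 1))) with hε_def
    have hεr : ε ≤ r / (2 * (Cc + 1)) := min_le_right _ _
    have hετ : ε ≤ τ := min_le_left _ _
    have hε0 : 0 < ε := lt_min hτ0 (by positivity)
    have hs₁0 : 0 ≤ s₁ := by linarith
    have hs₁T : s₁ ≤ T := le_trans hs₁u hτT
    have huIcc' : ∀ u ∈ Icc s₁ τ, u ∈ Icc (0:ℝ) T := fun u hu =>
      ⟨le_trans hs₁0 hu.1, le_trans hu.2 hτT⟩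
    have hmemIcc : ∀ a ∈ Icc s₁ τ, ∀ b ∈ Icc s₁ τ, ∀ v ∈ Set.uIoc a b, v ∈ Icc (0:ℝ) T := by
      intro a ha b hb v hv
      have h1 : v ∈ Set.Icc (a ⊓ b) (a ⊔ b) := Set.Ioc_subset_Icc_self hv
      exact huIcc' v ⟨le_trans (le_min ha.1 hb.1) h1.1,
        le_trans h1.2 (max_le ha.2 hb.2)⟩
    have hCcε : Cc * ε ≤ r / 2 := by
      have h1 : Cc * ε ≤ Cc * (r / (2 * (Cc + 1))) := mul_le_mul_of_nonneg_left hεr hCc0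
      have h2 : Cc * (r / (2 * (Cc + 1))) ≤ r / 2 := by
        rw [mul_div_assoc']
        rw [div_le_div_iff₀ (by positivity) (by norm_num)]
        nlinarith
      linarith
    have main : ∀ x ∈ closedBall x₁ (r / 2), W s₁ (x + ∫ v in τ..s₁, c v) = 0 := by
      intro x hx
      set y : ℝ → ℂ := fun u => x + ∫ v in τ..u, c v with hy_def
      have hyderiv : ∀ u, HasDerivAt y (c u) u := fun u => (hFTC c hc τ u).const_add x
      have hyτ : y τ = x := by simp [hy_def]
      have hydiff : ∀ a ∈ Icc s₁ τ, ∀ b ∈ Icc s₁ τ, ‖y b - y a‖ ≤ Cc * |b - a| := by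
        intro a ha b hb
        have heq2 : y b - y a = ∫ v in a..b, c v := by
          simp only [hy_def]
          rw [add_sub_add_left_eq_sub,
            ← intervalIntegral.integral_interval_sub_left (hc.intervalIntegrable τ b)
              (hc.intervalIntegrable τ a)]
        rw [heq2]
        exact intervalIntegral.norm_integral_le_of_norm_le_const
          (fun v hv => hCc v (hmemIcc a ha b hb v hv))
      have hτmem : τ ∈ Icc s₁ τ := right_mem_Icc.2 hs₁u
      have hyball : ∀ u ∈ Icc s₁ τ, y u ∈ closedBall x₁ r := by
        intro u hu
        have h1 : ‖y u - x‖ ≤ Cc * |u - τ| := by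
          have := hydiff τ hτmem u hu
          rwa [hyτ] at this
        have h2 : |u - τ| ≤ ε := by
          rw [abs_sub_comm, abs_of_nonneg (by linarith [hu.2])]
          linarith [hu.1]
        have h3 : ‖y u - x‖ ≤ r / 2 := by
          calc ‖y u - x‖ ≤ Cc * |u - τ| := h1
            _ ≤ Cc * ε := mul_le_mul_of_nonneg_left h2 hCc0
            _ ≤ r / 2 := hCcε
        rw [mem_closedBall, dist_eq_norm]
        rw [mem_closedBall, dist_eq_norm] at hx
        calc ‖y u - x₁‖ ≤ ‖y u - x‖ + ‖x - x₁‖ := norm_sub_le_norm_sub_add_norm_sub _ _ _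
          _ ≤ r / 2 + r / 2 := add_le_add h3 hx
          _ = r := by ring
      -- the chain rule along the characteristic
      have hF : ∀ u ∈ Icc s₁ τ, HasDerivWithinAt (fun u' => W u' (y u'))
          (-(α u * W u (y u) + c u * deriv (W u) (y u)) + deriv (W u) (y u) * c u)
          (Icc s₁ τ) u := by
        intro u hu
        have huT := huIcc' u hu
        have hzball := hyball u hu
        have h1 : HasDerivAt (fun u' => W u' (y u))
            (-(α u * W u (y u) + c u * deriv (W u) (y u))) u := hW_pde u huT (y u)
        have h2 : HasDerivWithinAt (fun u' => W u' (y u') - W u' (y u))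
            (deriv (W u) (y u) * c u) (Icc s₁ τ) u := by
          rw [hasDerivWithinAt_iff_isLittleO, Asymptotics.isLittleO_iff]
          intro C hC
          set Gz := deriv (W u) (y u) with hGz_def
          have hη : (0:ℝ) < C / (2 * (Cc + 1)) := by positivity
          obtain ⟨δ, hδ0, hδ⟩ := hGcont u huT (y u) hzball _ hη
          have hy_lo : ∀ᶠ u' in 𝓝 u, ‖y u' - y u - (u' - u) • c u‖ ≤
              C / (2 * (‖Gz‖ + 1)) * ‖u' - u‖ :=
            (hasDerivAt_iff_isLittleO.1 (hyderiv u)).def (by positivity)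
          have hsmall : ∀ᶠ u' in 𝓝 u, |u' - u| < δ / (Cc + 1) := by
            filter_upwards [Metric.ball_mem_nhds u (show (0:ℝ) < δ / (Cc + 1) by positivity)]
              with u' hu'
            rwa [mem_ball, Real.dist_eq] at hu'
          filter_upwards [self_mem_nhdsWithin, hy_lo.filter_mono nhdsWithin_le_nhds,
            hsmall.filter_mono nhdsWithin_le_nhds] with u' hu'mem hylo' hsm
          simp only [sub_self, sub_zero]
          have hu'T := huIcc' u' hu'mem
          have hywithin : y u' ∈ closedBall x₁ r := hyball u' hu'mem
          have hyd : ‖y u' - y u‖ ≤ Cc * |u' - u| := hydiff u hu u' hu'mem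
          have hδlt : |u' - u| < δ := by
            have : δ / (Cc + 1) ≤ δ := by
              rw [div_le_iff₀ (by positivity)]; nlinarith
            linarith
          have hyclose : ‖y u' - y u‖ < δ := by
            have h4 : Cc * |u' - u| ≤ Cc * (δ / (Cc + 1)) :=
              mul_le_mul_of_nonneg_left hsm.le hCc0
            have h5 : Cc * (δ / (Cc + 1)) < δ := by
              rw [mul_div_assoc']
              rw [div_lt_iff₀ (by positivity)]
              nlinarith
            linarith
          -- Term 1 : mean value estimate on the segment
          have hT1 : ‖W u' (y u') - W u' (y u) - Gz * (y u' - y u)‖ ≤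
              C / (2 * (Cc + 1)) * ‖y u' - y u‖ := by
            have hseg : ∀ ζ ∈ segment ℝ (y u) (y u'), ζ ∈ closedBall x₁ r :=
              fun ζ hζ => (convex_closedBall x₁ r).segment_subset hzball hywithin hζ
            have hsegclose : ∀ ζ ∈ segment ℝ (y u) (y u'), ‖ζ - y u‖ < δ := by
              intro ζ hζ
              have h6 : ζ ∈ closedBall (y u) ‖y u' - y u‖ :=
                (convex_closedBall _ _).segment_subset (mem_closedBall_self (norm_nonneg _))
                  (by rw [mem_closedBall, dist_eq_norm]) hζ
              rw [mem_closedBall, dist_eq_norm] at h6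
              exact lt_of_le_of_lt h6 hyclose
            have key := Convex.norm_image_sub_le_of_norm_deriv_le (𝕜 := ℂ)
              (f := fun ζ => W u' ζ - Gz * ζ) (s := segment ℝ (y u) (y u'))
              (C := C / (2 * (Cc + 1)))
              (fun ζ _ => ((hW_hol u') ζ).sub (differentiableAt_id.const_mul _))
              (fun ζ hζ => by
                have hder : HasDerivAt (fun ζ => W u' ζ - Gz * ζ)
                    (deriv (W u') ζ - Gz * 1) ζ := by
                  exact ((hW_hol u') ζ).hasDerivAt.sub ((hasDerivAt_id ζ).const_mul Gz)
                rw [hder.deriv, mul_one]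
                exact (hδ u' hu'T ζ (hseg ζ hζ) hδlt (hsegclose ζ hζ)).le)
              (convex_segment _ _) (left_mem_segment ℝ _ _) (right_mem_segment ℝ _ _)
            calc ‖W u' (y u') - W u' (y u) - Gz * (y u' - y u)‖
                = ‖(W u' (y u') - Gz * y u') - (W u' (y u) - Gz * y u)‖ := by
                  rw [show W u' (y u') - W u' (y u) - Gz * (y u' - y u) =
                    (W u' (y u') - Gz * y u') - (W u' (y u) - Gz * y u) from by ring]
              _ ≤ C / (2 * (Cc + 1)) * ‖y u' - y u‖ := key
          -- assemble
          have hsplit : W u' (y u') - W u' (y u) - (u' - u) • (Gz * c u) =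
              (W u' (y u') - W u' (y u) - Gz * (y u' - y u)) +
                Gz * (y u' - y u - (u' - u) • c u) := by
            simp only [Complex.real_smul]
            ring
          rw [hsplit]
          have hGz1 : (0:ℝ) < ‖Gz‖ + 1 := by positivity
          have k1 : C / (2 * (Cc + 1)) * ‖y u' - y u‖ ≤ C / 2 * ‖u' - u‖ := by
            have h7 : ‖y u' - y u‖ ≤ Cc * ‖u' - u‖ := by
              rwa [Real.norm_eq_abs]
            calc C / (2 * (Cc + 1)) * ‖y u' - y u‖ ≤ C / (2 * (Cc + 1)) * (Cc * ‖u' - u‖) :=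
                mul_le_mul_of_nonneg_left h7 hη.le
              _ ≤ C / 2 * ‖u' - u‖ := by
                rw [div_mul_eq_mul_div, div_mul_eq_mul_div, div_le_div_iff₀ (by positivity)
                  (by norm_num)]
                nlinarith [norm_nonneg (u' - u)]
          have k2 : ‖Gz‖ * (C / (2 * (‖Gz‖ + 1)) * ‖u' - u‖) ≤ C / 2 * ‖u' - u‖ := by
            rw [div_mul_eq_mul_div, mul_div_assoc', div_mul_eq_mul_div,
              div_le_div_iff₀ (by positivity) (by norm_num)]
            nlinarith [norm_nonneg (u' - u), norm_nonneg Gz]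
          calc ‖(W u' (y u') - W u' (y u) - Gz * (y u' - y u)) +
                Gz * (y u' - y u - (u' - u) • c u)‖
              ≤ ‖W u' (y u') - W u' (y u) - Gz * (y u' - y u)‖ +
                ‖Gz‖ * ‖y u' - y u - (u' - u) • c u‖ := by
                refine (norm_add_le _ _).trans ?_
                rw [norm_mul]
            _ ≤ C / (2 * (Cc + 1)) * ‖y u' - y u‖ +
                ‖Gz‖ * (C / (2 * (‖Gz‖ + 1)) * ‖u' - u‖) :=
                add_le_add hT1 (mul_le_mul_of_nonneg_left hylo' (norm_nonneg _))
            _ ≤ C / 2 * ‖u' - u‖ + C / 2 * ‖u' - u‖ := add_le_add k1 k2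
            _ = C * ‖u' - u‖ := by ring
        have hsum := h1.hasDerivWithinAt.add h2
        have heqf : (fun u' => W u' (y u) + (W u' (y u') - W u' (y u))) =
            fun u' => W u' (y u') := by funext u'; ring
        rw [← heqf]
        exact hsum
      -- integrating factor
      set A : ℝ → ℂ := fun u => ∫ v in τ..u, α v with hA_def
      have hAderiv : ∀ u, HasDerivAt A (α u) u := fun u => hFTC α hα τ u
      set ψ : ℝ → ℂ := fun u => W u (y u) * Complex.exp (A u) with hψ_def
      have hψd : ∀ u ∈ Icc s₁ τ, HasDerivWithinAt ψ 0 (Icc s₁ τ) u := by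
        intro u hu
        have hE : HasDerivAt (fun v => Complex.exp (A v)) (Complex.exp (A u) * α u) u :=
          (hAderiv u).cexp
        have hmul := (hF u hu).mul hE.hasDerivWithinAt
        convert hmul using 1
        · rfl
        · rfl
        · ring
      have hψcont : ContinuousOn ψ (Icc s₁ τ) := fun u hu => (hψd u hu).continuousWithinAt
      have hψconst : ψ τ = ψ s₁ := by
        rcases eq_or_lt_of_le hs₁u with heq | hlt
        · rw [heq]
        · exact constant_of_has_deriv_right_zero hψcont
            (fun u hu => (hψd u ⟨hu.1, hu.2.le⟩).mono_of_mem_nhdsWithin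
              (Icc_mem_nhdsGE_of_mem hu)) τ (right_mem_Icc.2 hs₁u)
      have hψτ : ψ τ = 0 := by
        show W τ (y τ) * Complex.exp (A τ) = 0
        rw [hyτ, hWτ x, zero_mul]
      have hψs₁ : ψ s₁ = 0 := by rw [← hψconst, hψτ]
      have hW0 : W s₁ (y s₁) = 0 := by
        have := mul_eq_zero.1 hψs₁
        rcases this with h | h
        · exact h
        · exact absurd h (Complex.exp_ne_zero _)
      exact hW0
    -- identity theorem : vanishing on a ball implies vanishing everywhere
    intro x0
    have han : AnalyticOnNhd ℂ (W s₁) univ :=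
      Complex.analyticOnNhd_univ_iff_differentiable.2 (hW_hol s₁)
    have heqz : EqOn (W s₁) 0 univ := by
      apply han.eqOn_zero_of_preconnected_of_eventuallyEq_zero isPreconnected_univ
        (mem_univ (x₁ + ∫ v in τ..s₁, c v))
      have hball : ball (x₁ + ∫ v in τ..s₁, c v) (r / 2) ∈
          𝓝 (x₁ + ∫ v in τ..s₁, c v) := ball_mem_nhds _ (by positivity)
      filter_upwards [hball] with z hz
      have hz' : z - (∫ v in τ..s₁, c v) ∈ closedBall x₁ (r / 2) := by
        rw [mem_closedBall, dist_eq_norm]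
        rw [mem_ball, dist_eq_norm] at hz
        have : z - (∫ v in τ..s₁, c v) - x₁ = z - (x₁ + ∫ v in τ..s₁, c v) := by ring
        rw [this]
        exact hz.le
      have := main _ hz'
      simpa using this
    exact heqz (mem_univ x0)
  -- downward continuous induction
  have hSne : (T:ℝ) ∈ {t | t ∈ Icc (0:ℝ) T ∧ ∀ s ∈ Icc t T, ∀ x : ℂ, W s x = 0} := by
    refine ⟨⟨hT.le, le_refl T⟩, fun s hs x => ?_⟩
    have : s = T := le_antisymm hs.2 hs.1
    rw [this]; exact hW_term x
  set S : Set ℝ := {t | t ∈ Icc (0:ℝ) T ∧ ∀ s ∈ Icc t T, ∀ x : ℂ, W s x = 0} with hS_def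
  have hSne' : S.Nonempty := ⟨T, hSne⟩
  have hSbdd : BddBelow S := ⟨0, fun t ht => ht.1.1⟩
  set t₀ := sInf S with ht₀_def
  have ht₀0 : 0 ≤ t₀ := le_csInf hSne' fun t ht => ht.1.1
  have ht₀T : t₀ ≤ T := csInf_le hSbdd hSne
  have hafter : ∀ s, t₀ < s → s ≤ T → ∀ x : ℂ, W s x = 0 := by
    intro s hls hsT x
    obtain ⟨t, htS, hts⟩ := (csInf_lt_iff hSbdd hSne').1 hls
    exact htS.2 s ⟨hts.le, hsT⟩ x
  have ht₀zero : ∀ x : ℂ, W t₀ x = 0 := by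
    intro x
    rcases eq_or_lt_of_le ht₀T with heq | hlt
    · rw [heq]; exact hW_term x
    · have hne : (𝓝[Ioc t₀ T] t₀).NeBot := by
        rw [← mem_closure_iff_nhdsWithin_neBot, closure_Ioc hlt.ne]
        exact left_mem_Icc.2 hlt.le
      have h0 : Filter.Tendsto (fun s => W s x) (𝓝[Ioc t₀ T] t₀) (𝓝 (W t₀ x)) :=
        (hWtc x t₀ ⟨ht₀0, ht₀T⟩).mono_left
          (nhdsWithin_mono _ (fun s hs => ⟨le_trans ht₀0 hs.1.le, hs.2⟩))
      have h1 : (fun s => W s x) =ᶠ[𝓝[Ioc t₀ T] t₀] (fun _ => 0) :=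
        eventually_nhdsWithin_of_forall fun s hs => hafter s hs.1 hs.2 x
      have h2 : Filter.Tendsto (fun s => W s x) (𝓝[Ioc t₀ T] t₀) (𝓝 0) :=
        Filter.Tendsto.congr' h1.symm tendsto_const_nhds
      exact tendsto_nhds_unique h0 h2
  have ht₀eq : t₀ = 0 := by
    by_contra hne0
    have ht₀pos : 0 < t₀ := lt_of_le_of_ne ht₀0 (Ne.symm hne0)
    set ε := min t₀ (r / (2 * (Cc + 1))) with hε_def
    have hε0 : 0 < ε := lt_min ht₀pos (by positivity)
    have hετ : ε ≤ t₀ := min_le_left _ _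
    have hstep := prop t₀ ht₀pos ht₀T ht₀zero
    have hmem : t₀ - ε ∈ S := by
      refine ⟨⟨by linarith, by linarith⟩, fun s hs x => ?_⟩
      rcases le_or_gt s t₀ with hle | hgt
      · exact hstep s hs.1 hle x
      · exact hafter s hgt hs.2 x
    have := csInf_le hSbdd hmem
    linarith
  intro t ht x
  rcases eq_or_lt_of_le ht.1 with heq | hpos
  · rw [← heq, ← ht₀eq]
    exact ht₀zero x
  · exact hafter t (by rw [ht₀eq]; exact hpos) ht.2 x

theorem complex_pde_uniqueness
    (T : ℝ) (hT : 0 < T)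
    (gt : ℝ → ℂ → ℂ) (h : ℂ → ℂ) (α β θ σ γ : ℝ → ℂ)
    (hgt_cont : Continuous fun p : ℝ × ℂ => gt p.1 p.2)
    (hgt_hol : ∀ t, Differentiable ℂ (gt t))
    (hh : Differentiable ℂ h)
    (hα : Continuous α) (hβ : Continuous β) (hθ : Continuous θ)
    (hσ : Continuous σ) (hγ : Continuous γ)
    (U V : ℝ → ℂ → ℂ)
    (hU_hol : ∀ t, Differentiable ℂ (U t))
    (hV_hol : ∀ t, Differentiable ℂ (V t))
    (hU_pde : ∀ t ∈ Set.Icc 0 T, ∀ x : ℂ,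
      HasDerivAt (fun s => U s x)
        (-(gt t x + α t * U t x + β t * (σ t * deriv (U t) x) + θ t * (γ t * deriv (U t) x))) t)
    (hV_pde : ∀ t ∈ Set.Icc 0 T, ∀ x : ℂ,
      HasDerivAt (fun s => V s x)
        (-(gt t x + α t * V t x + β t * (σ t * deriv (V t) x) + θ t * (γ t * deriv (V t) x))) t)
    (hU_term : ∀ x, U T x = h x) (hV_term : ∀ x, V T x = h x) :
    ∀ t ∈ Set.Icc 0 T, ∀ x : ℂ, U t x = V t x := by
  have key := key_uniqueness T hT α (fun t => β t * σ t + θ t * γ t) hα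
    ((hβ.mul hσ).add (hθ.mul hγ))
    (fun s x => U s x - V s x)
    (fun t => (hU_hol t).sub (hV_hol t))
    (by
      intro t ht x
      have hd : deriv (fun x => U t x - V t x) x = deriv (U t) x - deriv (V t) x :=
        deriv_sub ((hU_hol t) x) ((hV_hol t) x)
      have h3 := (hU_pde t ht x).sub (hV_pde t ht x)
      refine h3.congr_deriv ?_
      rw [hd]
      ring)
    (fun x => by show U T x - V T x = 0; rw [hU_term x, hV_term x, sub_self])
  intro t ht x
  have := key t ht x
  exact sub_eq_zero.1 this
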